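/- In the marriage problem with P1 = (M1,M1,M2,W1,W2,W1) under the man-proposing DA with truthful men and utility u_conv = (25,5,1), the set H = {W1,W2} × {W1,...,W6} × {W1,...,W6} of women's report profiles is a partial preimage of μ^M_1 = [(m1,w1),(m2,w2),(m3,w3)] that is closed under weakly better replies; hence μ^M_1 is asymptotically stable. -/

import Mathlib

open scoped Classical

/-- A marriage problem's (strict) preference profile, given by injective rank
functions over potential partners plus the option `none` of staying single
(lower rank = more preferred). -/
structure Pref (M W : Type) where
  mrank : M → Option W → ℕ
  wrank : W → Option M → ℕ
  minj : ∀ a x y, mrank a x = mrank a y → x = y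
  winj : ∀ b x y, wrank b x = wrank b y → x = y

/-- A one-to-one matching between `M` and `W` (with `none` = single). -/
structure Matching (M W : Type) where
  mu : M → Option W
  nu : W → Option M
  consistent : ∀ a b, mu a = some b ↔ nu b = some a

/-- No player strictly prefers being single to the assigned partner. -/
def IndivRational {M W : Type} (P : Pref M W) (μ : Matching M W) : Prop :=
  (∀ a, ¬ P.mrank a none < P.mrank a (μ.mu a)) ∧
  (∀ b, ¬ P.wrank b none < P.wrank b (μ.nu b))

/-- The pair `(a, b)` blocks `μ`. -/
def Blocks {M W : Type} (P : Pref M W) (μ : Matching M W) (a : M) (b : W) : Prop :=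
  P.mrank a (some b) < P.mrank a (μ.mu a) ∧ P.wrank b (some a) < P.wrank b (μ.nu b)

/-- Stability: individual rationality together with absence of blocking pairs. -/
def StableMatching {M W : Type} (P : Pref M W) (μ : Matching M W) : Prop :=
  IndivRational P μ ∧ ∀ a b, ¬ Blocks P μ a b

noncomputable section

variable {M W : Type} [Fintype M] [Fintype W]

/-- `b` is acceptable to man `a`. -/
def mAcc (P : Pref M W) (a : M) (b : W) : Prop := P.mrank a (some b) < P.mrank a none

/-- `a` is acceptable to woman `b`. -/
def wAcc (P : Pref M W) (b : W) (a : M) : Prop := P.wrank b (some a) < P.wrank b none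

/-- The state of the man-proposing deferred acceptance algorithm:
for each man, the index of the next woman on his list to propose to,
and for each woman, the proposer she currently (tentatively) holds. -/
structure DAState (M W : Type) where
  next : M → ℕ
  hold : W → Option M

/-- A man is free if no woman currently holds him. -/
def IsFree (s : DAState M W) (a : M) : Prop := ∀ b, s.hold b ≠ some a

/-- The `k`-th woman (0-indexed) on man `a`'s list of acceptable women,
in decreasing order of preference. -/
def target (P : Pref M W) (a : M) (k : ℕ) : Option W :=
  if h : ∃ b : W, mAcc P a b ∧
      (Finset.univ.filter fun b' => mAcc P a b' ∧
        P.mrank a (some b') < P.mrank a (some b)).card = k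
  then some h.choose else none

/-- Woman `b`'s most preferred acceptable man in the finite set `c` (if any). -/
def best (P : Pref M W) (b : W) (c : Finset M) : Option M :=
  if h : ∃ a ∈ c, wAcc P b a ∧ ∀ a' ∈ c, wAcc P b a' → P.wrank b (some a) ≤ P.wrank b (some a')
  then some h.choose else none

/-- One round of the man-proposing deferred acceptance algorithm: every free
man proposes to the next woman on his list; every woman holds the best
acceptable man among her current proposers and the man she held before. -/
def daStep (P : Pref M W) (s : DAState M W) : DAState M W where
  next a := if IsFree s a ∧ (target P a (s.next a)).isSome then s.next a + 1 else s.next a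
  hold b := best P b
    ((Finset.univ.filter fun a => IsFree s a ∧ target P a (s.next a) = some b) ∪
      (s.hold b).toFinset)

/-- The algorithm terminates when no free man has anyone left to propose to. -/
def Finished (P : Pref M W) (s : DAState M W) : Prop :=
  ∀ a, IsFree s a → target P a (s.next a) = none

/-- Iterate the deferred acceptance rounds (with fuel). -/
def daRun (P : Pref M W) : ℕ → DAState M W → DAState M W
  | 0, s => s
  | n + 1, s => if Finished P s then s else daRun P n (daStep P s)

/-- The initial state: every man is free and about to propose to his favorite. -/
def daInit : DAState M W := ⟨fun _ => 0, fun _ => none⟩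

/-- The final state of the man-proposing deferred acceptance algorithm
(the fuel is enough for the algorithm to have terminated). -/
def daFinal (P : Pref M W) : DAState M W :=
  daRun P (Fintype.card M * (Fintype.card W + 1) + 1) daInit

/-- The partner of woman `b` under the man-proposing DA matching. -/
def daNu (P : Pref M W) (b : W) : Option M := (daFinal P).hold b

/-- The partner of man `a` under the man-proposing DA matching. -/
def daMu (P : Pref M W) (a : M) : Option W :=
  if h : ∃ b, (daFinal P).hold b = some a then some h.choose else none

/-- Man `a` proposes to woman `b` at some point during the run of the
man-proposing deferred acceptance algorithm. -/
def Proposes (P : Pref M W) (a : M) (b : W) : Prop :=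
  ∃ n, IsFree (daRun P n daInit) a ∧ target P a ((daRun P n daInit).next a) = some b

end

/-- The rank function of the strict preference list `(a, b, c)` over `Fin 3`
(with staying single ranked last). -/
def pl (a b _c : Fin 3) : Option (Fin 3) → ℕ
  | some x => if x = a then 0 else if x = b then 1 else 2
  | none => 3

/-- The six possible strict preference lists over three partners, labelled
`0,…,5` for `M1,…,M6` (equivalently `W1,…,W6`):
`(1,2,3), (1,3,2), (2,1,3), (2,3,1), (3,1,2), (3,2,1)`. -/
def lab : Fin 6 → Option (Fin 3) → ℕ :=
  ![pl 0 1 2, pl 0 2 1, pl 1 0 2, pl 1 2 0, pl 2 0 1, pl 2 1 0]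

lemma lab_inj : ∀ (k : Fin 6) (x y : Option (Fin 3)), lab k x = lab k y → x = y := by
  decide

/-- The `3 × 3` marriage problem in which man `a` has the preference list
labelled `pm a` and woman `b` the list labelled `pw b`. -/
def mkPref (pm pw : Fin 3 → Fin 6) : Pref (Fin 3) (Fin 3) where
  mrank a := lab (pm a)
  wrank b := lab (pw b)
  minj a := lab_inj (pm a)
  winj b := lab_inj (pw b)

/-- The matching pairing man `a` with woman `f a` (with inverse map `g`). -/
def mkMatch (f g : Fin 3 → Fin 3) (hc : ∀ a b, f a = b ↔ g b = a) :
    Matching (Fin 3) (Fin 3) :=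
  ⟨fun a => some (f a), fun b => some (g b), by simp [hc]⟩

noncomputable section MixedGame

variable {I : Type} [Fintype I] [DecidableEq I] {S : I → Type} [∀ i, Fintype (S i)]

/-- A mixed strategy profile: one probability distribution per player. -/
def IsMixed (x : ∀ i, S i → ℝ) : Prop :=
  ∀ i, (∀ h, 0 ≤ x i h) ∧ ∑ h, x i h = 1

/-- The mixed profile `x` is supported on the product set `H`. -/
def SupportedOn (x : ∀ i, S i → ℝ) (H : ∀ i, Set (S i)) : Prop :=
  ∀ i h, x i h ≠ 0 → h ∈ H i

/-- Expected payoff to player `i` under the mixed strategy profile `x`. -/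
def expPay (π : ∀ _ : I, (∀ j, S j) → ℝ) (i : I) (x : ∀ j, S j → ℝ) : ℝ :=
  ∑ s : ∀ j, S j, (∏ j, x j (s j)) * π i s

/-- The Dirac (pure) mixed strategy on `h`. -/
def delta {i : I} (h : S i) : S i → ℝ := fun t => if t = h then 1 else 0

/-- `H` is closed under weakly better replies: any pure strategy of a player
that earns at least the average payoff against some mixed profile supported on
`H` already belongs to the player's component of `H`. -/
def CUWBR (π : ∀ _ : I, (∀ j, S j) → ℝ) (H : ∀ i, Set (S i)) : Prop :=
  ∀ (i : I) (h : S i),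
    (∃ x, IsMixed x ∧ SupportedOn x H ∧
      expPay π i x ≤ expPay π i (Function.update x i (delta h))) → h ∈ H i

end MixedGame

/-- Men's true preferences in `P1`: `(M1, M1, M2)` (men report truthfully). -/
def menP1 : Fin 3 → Fin 6 := ![0, 0, 1]

/-- Women's true preferences in `P1`: `(W1, W2, W1)`. -/
def womenP1 : Fin 3 → Fin 6 := ![0, 1, 0]

/-- The utility function `u_conv = (25, 5, 1)`: payoff from being matched with
one's first, second, or third true choice. -/
noncomputable def uconv : ℕ → ℝ := fun n =>
  if n = 0 then 25 else if n = 1 then 5 else if n = 2 then 1 else 0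

/-- Payoff of woman `i` in the revelation game of problem `P1` (men truthful,
man-proposing DA): `u_conv` applied to the true rank of her DA partner. -/
noncomputable def piP1 : ∀ _ : Fin 3, (Fin 3 → Fin 6) → ℝ := fun i r =>
  uconv (lab (womenP1 i) (daNu (mkPref menP1 r) i))

/-- `μ^M_1 = [(m1,w1), (m2,w2), (m3,w3)]`. -/
def muM1 : Matching (Fin 3) (Fin 3) := mkMatch ![0, 1, 2] ![0, 1, 2] (by decide)

/-- `H = {W1,W2} × {W1,…,W6} × {W1,…,W6}`. -/
def H19 : ∀ _ : Fin 3, Set (Fin 6) := ![{0, 1}, Set.univ, Set.univ]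

/-- A matching is asymptotically stable in the revelation game with payoffs `π`
if it has a (nonempty) partial preimage closed under weakly better replies. -/
def AsympStable (π : ∀ _ : Fin 3, (Fin 3 → Fin 6) → ℝ)
    (μ : Matching (Fin 3) (Fin 3)) : Prop :=
  ∃ H : ∀ _ : Fin 3, Set (Fin 6),
    (∃ r : Fin 3 → Fin 6, ∀ i, r i ∈ H i) ∧
    (∀ r : Fin 3 → Fin 6, (∀ i, r i ∈ H i) →
      daMu (mkPref menP1 r) = μ.mu ∧ daNu (mkPref menP1 r) = μ.nu) ∧
    CUWBR π H

section AuxGeneric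

open Finset

variable {M W : Type} [Fintype M] [Fintype W]

lemma DAState.ext' {s t : DAState M W} (h1 : s.next = t.next) (h2 : s.hold = t.hold) :
    s = t := by
  cases s; cases t; cases h1; cases h2; rfl

lemma card_filter_rank_lt (P : Pref M W) (a : M) {b b' : W} (hb : mAcc P a b)
    (hlt : P.mrank a (some b) < P.mrank a (some b')) :
    (Finset.univ.filter fun c => mAcc P a c ∧ P.mrank a (some c) < P.mrank a (some b)).card <
    (Finset.univ.filter fun c => mAcc P a c ∧ P.mrank a (some c) < P.mrank a (some b')).card := by
  apply Finset.card_lt_card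
  rw [Finset.ssubset_def]
  constructor
  · intro c hc
    simp only [Finset.mem_filter] at hc ⊢
    exact ⟨hc.1, hc.2.1, hc.2.2.trans hlt⟩
  · intro hsub
    have hbmem : b ∈ (Finset.univ.filter fun c => mAcc P a c ∧
        P.mrank a (some c) < P.mrank a (some b')) := by
      simp only [Finset.mem_filter]
      exact ⟨Finset.mem_univ _, hb, hlt⟩
    have := hsub hbmem
    simp only [Finset.mem_filter] at this
    exact lt_irrefl _ this.2.2

lemma target_eq_some (P : Pref M W) (a : M) (k : ℕ) (b : W)
    (h1 : mAcc P a b)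
    (h2 : (Finset.univ.filter fun b' => mAcc P a b' ∧
        P.mrank a (some b') < P.mrank a (some b)).card = k) :
    target P a k = some b := by
  have hex : ∃ b : W, mAcc P a b ∧ (Finset.univ.filter fun b' => mAcc P a b' ∧
      P.mrank a (some b') < P.mrank a (some b)).card = k := ⟨b, h1, h2⟩
  rw [target, dif_pos hex]
  obtain ⟨hc1, hc2⟩ := hex.choose_spec
  congr 1
  rcases lt_trichotomy (P.mrank a (some hex.choose)) (P.mrank a (some b)) with h | h | h
  · exact absurd (hc2.trans h2.symm) (ne_of_lt (card_filter_rank_lt P a hc1 h))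
  · exact Option.some.inj (P.minj a _ _ h)
  · exact absurd (h2.trans hc2.symm) (ne_of_lt (card_filter_rank_lt P a h1 h))

lemma best_eq_some (P : Pref M W) (b : W) (c : Finset M) (a : M)
    (ha : a ∈ c) (h1 : wAcc P b a)
    (h2 : ∀ a' ∈ c, wAcc P b a' → P.wrank b (some a) ≤ P.wrank b (some a')) :
    best P b c = some a := by
  have hex : ∃ a ∈ c, wAcc P b a ∧ ∀ a' ∈ c, wAcc P b a' →
      P.wrank b (some a) ≤ P.wrank b (some a') := ⟨a, ha, h1, h2⟩
  rw [best, dif_pos hex]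
  obtain ⟨hm, hw, hmin⟩ := hex.choose_spec
  exact P.winj b _ _ (le_antisymm (hmin a ha h1) (h2 _ hm hw))

lemma best_empty (P : Pref M W) (b : W) : best P b ∅ = none := by
  rw [best, dif_neg]
  rintro ⟨a, ha, -⟩
  exact absurd ha (Finset.notMem_empty a)

lemma daRun_step (P : Pref M W) (n : ℕ) (s : DAState M W) (h : ¬ Finished P s) :
    daRun P (n + 1) s = daRun P n (daStep P s) := by
  rw [daRun, if_neg h]

lemma daRun_finished (P : Pref M W) (n : ℕ) (s : DAState M W) (h : Finished P s) :
    daRun P n s = s := by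
  induction n with
  | zero => rfl
  | succ n _ => rw [daRun, if_pos h]

lemma filter_eq_of (p : Fin 3 → Prop) (inst : DecidablePred p) (s : Finset (Fin 3))
    (h : ∀ x, p x ↔ x ∈ s) :
    @Finset.filter _ p inst Finset.univ = s := by
  ext x
  rw [Finset.mem_filter]
  simp [h x]

lemma fin3cases (a : Fin 3) : a = 0 ∨ a = 1 ∨ a = 2 := by omega

lemma isFree_iff (s : DAState (Fin 3) (Fin 3)) (a : Fin 3) :
    IsFree s a ↔ (s.hold 0 ≠ some a ∧ s.hold 1 ≠ some a ∧ s.hold 2 ≠ some a) := by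
  constructor
  · exact fun h => ⟨h 0, h 1, h 2⟩
  · rintro ⟨h0, h1, h2⟩ b
    rcases fin3cases b with rfl | rfl | rfl <;> assumption

end AuxGeneric
section AuxConcrete

open Finset

lemma mAcc_all (r : Fin 3 → Fin 6) (a b : Fin 3) : mAcc (mkPref menP1 r) a b := by
  have : ∀ (k : Fin 6) (x : Fin 3), lab k (some x) < lab k none := by decide
  exact this _ _

lemma wAcc_all (r : Fin 3 → Fin 6) (b a : Fin 3) : wAcc (mkPref menP1 r) b a := by
  have : ∀ (k : Fin 6) (x : Fin 3), lab k (some x) < lab k none := by decide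
  exact this _ _

lemma tgt_aux (r : Fin 3 → Fin 6) (a b : Fin 3) (k : ℕ) (s : Finset (Fin 3))
    (hcard : s.card = k)
    (h : ∀ x : Fin 3, lab (menP1 a) (some x) < lab (menP1 a) (some b) ↔ x ∈ s) :
    target (mkPref menP1 r) a k = some b := by
  apply target_eq_some _ _ _ _ (mAcc_all r a b)
  rw [← hcard]
  apply congrArg
  apply filter_eq_of
  intro x
  simpa [mAcc_all, show (mkPref menP1 r).mrank a = lab (menP1 a) from rfl] using h x

lemma t00 (r : Fin 3 → Fin 6) : target (mkPref menP1 r) 0 0 = some 0 :=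
  tgt_aux r 0 0 0 ∅ (by decide) (by decide)
lemma t01 (r : Fin 3 → Fin 6) : target (mkPref menP1 r) 0 1 = some 1 :=
  tgt_aux r 0 1 1 {0} (by decide) (by decide)
lemma t02 (r : Fin 3 → Fin 6) : target (mkPref menP1 r) 0 2 = some 2 :=
  tgt_aux r 0 2 2 {0, 1} (by decide) (by decide)
lemma t10 (r : Fin 3 → Fin 6) : target (mkPref menP1 r) 1 0 = some 0 :=
  tgt_aux r 1 0 0 ∅ (by decide) (by decide)
lemma t11 (r : Fin 3 → Fin 6) : target (mkPref menP1 r) 1 1 = some 1 :=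
  tgt_aux r 1 1 1 {0} (by decide) (by decide)
lemma t12 (r : Fin 3 → Fin 6) : target (mkPref menP1 r) 1 2 = some 2 :=
  tgt_aux r 1 2 2 {0, 1} (by decide) (by decide)
lemma t20 (r : Fin 3 → Fin 6) : target (mkPref menP1 r) 2 0 = some 0 :=
  tgt_aux r 2 0 0 ∅ (by decide) (by decide)
lemma t21 (r : Fin 3 → Fin 6) : target (mkPref menP1 r) 2 1 = some 2 :=
  tgt_aux r 2 2 1 {0} (by decide) (by decide)

lemma best_aux (r : Fin 3 → Fin 6) (b : Fin 3) (c : Finset (Fin 3)) (a : Fin 3) (ha : a ∈ c)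
    (h : ∀ a' ∈ c, lab (r b) (some a) ≤ lab (r b) (some a')) :
    best (mkPref menP1 r) b c = some a :=
  best_eq_some _ _ _ _ ha (wAcc_all r b a) (fun a' ha' _ => h a' ha')

lemma best_singleton (r : Fin 3 → Fin 6) (b a : Fin 3) :
    best (mkPref menP1 r) b {a} = some a :=
  best_aux r b {a} a (Finset.mem_singleton_self a)
    (fun a' ha' => by rw [Finset.mem_singleton] at ha'; subst ha'; exact le_rfl)

lemma daMu_eq (P : Pref (Fin 3) (Fin 3)) (a b : Fin 3)
    (h : ∀ c : Fin 3, (daFinal P).hold c = some a ↔ c = b) : daMu P a = some b := by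
  have hex : ∃ c, (daFinal P).hold c = some a := ⟨b, (h b).2 rfl⟩
  rw [daMu, dif_pos hex, (h _).1 hex.choose_spec]

end AuxConcrete
section Trace

open Finset

/-- State after round 1: every man proposed to `w1`, who holds `m0`. -/
def st1 (m0 : Fin 3) : DAState (Fin 3) (Fin 3) :=
  ⟨fun _ => 1, fun b => if b = 0 then some m0 else none⟩

def sA2 : DAState (Fin 3) (Fin 3) :=
  ⟨fun a => if a = 0 then 1 else 2,
   fun b => if b = 0 then some 0 else if b = 1 then some 1 else some 2⟩

def sB2 : DAState (Fin 3) (Fin 3) :=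
  ⟨fun a => if a = 1 then 1 else 2,
   fun b => if b = 0 then some 1 else if b = 1 then some 0 else some 2⟩

def stC2 (m1 : Fin 3) : DAState (Fin 3) (Fin 3) :=
  ⟨fun a => if a = 2 then 1 else 2,
   fun b => if b = 0 then some 2 else if b = 1 then some m1 else none⟩

def sC3a : DAState (Fin 3) (Fin 3) :=
  ⟨fun a => if a = 1 then 3 else if a = 2 then 1 else 2,
   fun b => if b = 0 then some 2 else if b = 1 then some 0 else some 1⟩

def sC3b : DAState (Fin 3) (Fin 3) :=
  ⟨fun a => if a = 0 then 3 else if a = 2 then 1 else 2,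
   fun b => if b = 0 then some 2 else if b = 1 then some 1 else some 0⟩

lemma step1 (r : Fin 3 → Fin 6) (m0 : Fin 3)
    (hm : ∀ x : Fin 3, lab (r 0) (some m0) ≤ lab (r 0) (some x)) :
    daStep (mkPref menP1 r) daInit = st1 m0 := by
  have hfree : ∀ a : Fin 3, IsFree (daInit (M := Fin 3) (W := Fin 3)) a := by
    intro a b; simp [daInit]
  have htgt : ∀ a : Fin 3,
      target (mkPref menP1 r) a ((daInit (M := Fin 3) (W := Fin 3)).next a) = some 0 := by
    intro a
    rcases fin3cases a with rfl | rfl | rfl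
    · exact t00 r
    · exact t10 r
    · exact t20 r
  apply DAState.ext'
  · funext a
    simp only [daStep, st1]
    rw [if_pos ⟨hfree a, by rw [htgt a]; rfl⟩]
    rfl
  · funext b
    simp only [daStep, st1]
    rcases fin3cases b with rfl | rfl | rfl
    · rw [filter_eq_of _ _ Finset.univ (by intro x; simp [hfree, htgt])]
      simp only [daInit, Option.toFinset_none, Finset.union_empty]
      simpa using best_aux r 0 Finset.univ m0 (Finset.mem_univ _) (fun a' _ => hm a')
    · rw [filter_eq_of _ _ ∅ (by intro x; simp [hfree, htgt])]
      simpa [daInit] using best_empty (mkPref menP1 r) 1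
    · rw [filter_eq_of _ _ ∅ (by intro x; simp [hfree, htgt])]
      simpa [daInit] using best_empty (mkPref menP1 r) 2

lemma stepA2 (r : Fin 3 → Fin 6) : daStep (mkPref menP1 r) (st1 0) = sA2 := by
  have hf0 : ¬ IsFree (st1 0) 0 := by rw [isFree_iff]; decide
  have hf1 : IsFree (st1 0) 1 := by rw [isFree_iff]; decide
  have hf2 : IsFree (st1 0) 2 := by rw [isFree_iff]; decide
  apply DAState.ext'
  · funext a
    simp only [daStep]
    rcases fin3cases a with rfl | rfl | rfl
    · rw [if_neg (fun h => hf0 h.1)]; rfl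
    · rw [if_pos ⟨hf1, by rw [show (st1 0).next 1 = 1 from rfl, t11 r]; rfl⟩]; rfl
    · rw [if_pos ⟨hf2, by rw [show (st1 0).next 2 = 1 from rfl, t21 r]; rfl⟩]; rfl
  · funext b
    simp only [daStep]
    rcases fin3cases b with rfl | rfl | rfl
    · rw [filter_eq_of _ _ ∅ ?_]
      · simpa [st1, sA2] using best_singleton r 0 0
      · intro x
        simp only [Finset.notMem_empty, iff_false]
        rintro ⟨hf, ht⟩
        rcases fin3cases x with rfl | rfl | rfl
        · exact hf0 hf
        · rw [show (st1 0).next 1 = 1 from rfl, t11 r] at ht; simp at ht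
        · rw [show (st1 0).next 2 = 1 from rfl, t21 r] at ht; simp at ht
    · rw [filter_eq_of _ _ {1} ?_]
      · simpa [st1, sA2] using best_singleton r 1 1
      · intro x
        rcases fin3cases x with rfl | rfl | rfl
        · exact iff_of_false (fun h => hf0 h.1) (by decide)
        · exact iff_of_true ⟨hf1, by rw [show (st1 0).next 1 = 1 from rfl]; exact t11 r⟩
            (by decide)
        · refine iff_of_false (fun h => ?_) (by decide)
          rw [show (st1 0).next 2 = 1 from rfl, t21 r] at h; simp at h
    · rw [filter_eq_of _ _ {2} ?_]
      · simpa [st1, sA2] using best_singleton r 2 2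
      · intro x
        rcases fin3cases x with rfl | rfl | rfl
        · exact iff_of_false (fun h => hf0 h.1) (by decide)
        · refine iff_of_false (fun h => ?_) (by decide)
          rw [show (st1 0).next 1 = 1 from rfl, t11 r] at h; simp at h
        · exact iff_of_true ⟨hf2, by rw [show (st1 0).next 2 = 1 from rfl]; exact t21 r⟩
            (by decide)

end Trace
section Trace2

open Finset

lemma stepB2 (r : Fin 3 → Fin 6) : daStep (mkPref menP1 r) (st1 1) = sB2 := by
  have hf0 : IsFree (st1 1) 0 := by rw [isFree_iff]; decide
  have hf1 : ¬ IsFree (st1 1) 1 := by rw [isFree_iff]; decide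
  have hf2 : IsFree (st1 1) 2 := by rw [isFree_iff]; decide
  apply DAState.ext'
  · funext a
    simp only [daStep]
    rcases fin3cases a with rfl | rfl | rfl
    · rw [if_pos ⟨hf0, by rw [show (st1 1).next 0 = 1 from rfl, t01 r]; rfl⟩]; rfl
    · rw [if_neg (fun h => hf1 h.1)]; rfl
    · rw [if_pos ⟨hf2, by rw [show (st1 1).next 2 = 1 from rfl, t21 r]; rfl⟩]; rfl
  · funext b
    simp only [daStep]
    rcases fin3cases b with rfl | rfl | rfl
    · rw [filter_eq_of _ _ ∅ ?_]
      · simpa [st1, sB2] using best_singleton r 0 1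
      · intro x
        simp only [Finset.notMem_empty, iff_false]
        rintro ⟨hf, ht⟩
        rcases fin3cases x with rfl | rfl | rfl
        · rw [show (st1 1).next 0 = 1 from rfl, t01 r] at ht; simp at ht
        · exact hf1 hf
        · rw [show (st1 1).next 2 = 1 from rfl, t21 r] at ht; simp at ht
    · rw [filter_eq_of _ _ {0} ?_]
      · simpa [st1, sB2] using best_singleton r 1 0
      · intro x
        rcases fin3cases x with rfl | rfl | rfl
        · exact iff_of_true ⟨hf0, by rw [show (st1 1).next 0 = 1 from rfl]; exact t01 r⟩
            (by decide)
        · exact iff_of_false (fun h => hf1 h.1) (by decide)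
        · refine iff_of_false (fun h => ?_) (by decide)
          rw [show (st1 1).next 2 = 1 from rfl, t21 r] at h; simp at h
    · rw [filter_eq_of _ _ {2} ?_]
      · simpa [st1, sB2] using best_singleton r 2 2
      · intro x
        rcases fin3cases x with rfl | rfl | rfl
        · refine iff_of_false (fun h => ?_) (by decide)
          rw [show (st1 1).next 0 = 1 from rfl, t01 r] at h; simp at h
        · exact iff_of_false (fun h => hf1 h.1) (by decide)
        · exact iff_of_true ⟨hf2, by rw [show (st1 1).next 2 = 1 from rfl]; exact t21 r⟩
            (by decide)

lemma stepC2 (r : Fin 3 → Fin 6) (m1 : Fin 3) (hm0 : m1 = 0 ∨ m1 = 1)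
    (hm : ∀ x : Fin 3, x = 0 ∨ x = 1 → lab (r 1) (some m1) ≤ lab (r 1) (some x)) :
    daStep (mkPref menP1 r) (st1 2) = stC2 m1 := by
  have hf0 : IsFree (st1 2) 0 := by rw [isFree_iff]; decide
  have hf1 : IsFree (st1 2) 1 := by rw [isFree_iff]; decide
  have hf2 : ¬ IsFree (st1 2) 2 := by rw [isFree_iff]; decide
  apply DAState.ext'
  · funext a
    simp only [daStep]
    rcases fin3cases a with rfl | rfl | rfl
    · rw [if_pos ⟨hf0, by rw [show (st1 2).next 0 = 1 from rfl, t01 r]; rfl⟩]; rfl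
    · rw [if_pos ⟨hf1, by rw [show (st1 2).next 1 = 1 from rfl, t11 r]; rfl⟩]; rfl
    · rw [if_neg (fun h => hf2 h.1)]; rfl
  · funext b
    simp only [daStep]
    rcases fin3cases b with rfl | rfl | rfl
    · rw [filter_eq_of _ _ ∅ ?_]
      · simpa [st1, stC2] using best_singleton r 0 2
      · intro x
        simp only [Finset.notMem_empty, iff_false]
        rintro ⟨hf, ht⟩
        rcases fin3cases x with rfl | rfl | rfl
        · rw [show (st1 2).next 0 = 1 from rfl, t01 r] at ht; simp at ht
        · rw [show (st1 2).next 1 = 1 from rfl, t11 r] at ht; simp at ht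
        · exact hf2 hf
    · rw [filter_eq_of _ _ {0, 1} ?_]
      · have he : ((st1 2).hold 1).toFinset = ∅ := rfl
        simp only [he, Finset.union_empty]
        rw [show (stC2 m1).hold 1 = some m1 from rfl]
        refine best_aux r 1 {0, 1} m1 ?_ ?_
        · rcases hm0 with rfl | rfl <;> decide
        · intro a' ha'
          rw [Finset.mem_insert, Finset.mem_singleton] at ha'
          exact hm a' ha'
      · intro x
        rcases fin3cases x with rfl | rfl | rfl
        · exact iff_of_true ⟨hf0, by rw [show (st1 2).next 0 = 1 from rfl]; exact t01 r⟩
            (by decide)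
        · exact iff_of_true ⟨hf1, by rw [show (st1 2).next 1 = 1 from rfl]; exact t11 r⟩
            (by decide)
        · exact iff_of_false (fun h => hf2 h.1) (by decide)
    · rw [filter_eq_of _ _ ∅ ?_]
      · simpa [st1, stC2] using best_empty (mkPref menP1 r) 2
      · intro x
        simp only [Finset.notMem_empty, iff_false]
        rintro ⟨hf, ht⟩
        rcases fin3cases x with rfl | rfl | rfl
        · rw [show (st1 2).next 0 = 1 from rfl, t01 r] at ht; simp at ht
        · rw [show (st1 2).next 1 = 1 from rfl, t11 r] at ht; simp at ht
        · exact hf2 hf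

lemma stepC3a (r : Fin 3 → Fin 6) : daStep (mkPref menP1 r) (stC2 0) = sC3a := by
  have hf0 : ¬ IsFree (stC2 0) 0 := by rw [isFree_iff]; decide
  have hf1 : IsFree (stC2 0) 1 := by rw [isFree_iff]; decide
  have hf2 : ¬ IsFree (stC2 0) 2 := by rw [isFree_iff]; decide
  apply DAState.ext'
  · funext a
    simp only [daStep]
    rcases fin3cases a with rfl | rfl | rfl
    · rw [if_neg (fun h => hf0 h.1)]; rfl
    · rw [if_pos ⟨hf1, by rw [show (stC2 0).next 1 = 2 from rfl, t12 r]; rfl⟩]; rfl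
    · rw [if_neg (fun h => hf2 h.1)]; rfl
  · funext b
    simp only [daStep]
    rcases fin3cases b with rfl | rfl | rfl
    · rw [filter_eq_of _ _ ∅ ?_]
      · simpa [stC2, sC3a] using best_singleton r 0 2
      · intro x
        simp only [Finset.notMem_empty, iff_false]
        rintro ⟨hf, ht⟩
        rcases fin3cases x with rfl | rfl | rfl
        · exact hf0 hf
        · rw [show (stC2 0).next 1 = 2 from rfl, t12 r] at ht; simp at ht
        · exact hf2 hf
    · rw [filter_eq_of _ _ ∅ ?_]
      · simpa [stC2, sC3a] using best_singleton r 1 0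
      · intro x
        simp only [Finset.notMem_empty, iff_false]
        rintro ⟨hf, ht⟩
        rcases fin3cases x with rfl | rfl | rfl
        · exact hf0 hf
        · rw [show (stC2 0).next 1 = 2 from rfl, t12 r] at ht; simp at ht
        · exact hf2 hf
    · rw [filter_eq_of _ _ {1} ?_]
      · simpa [stC2, sC3a] using best_singleton r 2 1
      · intro x
        rcases fin3cases x with rfl | rfl | rfl
        · exact iff_of_false (fun h => hf0 h.1) (by decide)
        · exact iff_of_true ⟨hf1, by rw [show (stC2 0).next 1 = 2 from rfl]; exact t12 r⟩
            (by decide)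
        · exact iff_of_false (fun h => hf2 h.1) (by decide)

lemma stepC3b (r : Fin 3 → Fin 6) : daStep (mkPref menP1 r) (stC2 1) = sC3b := by
  have hf0 : IsFree (stC2 1) 0 := by rw [isFree_iff]; decide
  have hf1 : ¬ IsFree (stC2 1) 1 := by rw [isFree_iff]; decide
  have hf2 : ¬ IsFree (stC2 1) 2 := by rw [isFree_iff]; decide
  apply DAState.ext'
  · funext a
    simp only [daStep]
    rcases fin3cases a with rfl | rfl | rfl
    · rw [if_pos ⟨hf0, by rw [show (stC2 1).next 0 = 2 from rfl, t02 r]; rfl⟩]; rfl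
    · rw [if_neg (fun h => hf1 h.1)]; rfl
    · rw [if_neg (fun h => hf2 h.1)]; rfl
  · funext b
    simp only [daStep]
    rcases fin3cases b with rfl | rfl | rfl
    · rw [filter_eq_of _ _ ∅ ?_]
      · simpa [stC2, sC3b] using best_singleton r 0 2
      · intro x
        simp only [Finset.notMem_empty, iff_false]
        rintro ⟨hf, ht⟩
        rcases fin3cases x with rfl | rfl | rfl
        · rw [show (stC2 1).next 0 = 2 from rfl, t02 r] at ht; simp at ht
        · exact hf1 hf
        · exact hf2 hf
    · rw [filter_eq_of _ _ ∅ ?_]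
      · simpa [stC2, sC3b] using best_singleton r 1 1
      · intro x
        simp only [Finset.notMem_empty, iff_false]
        rintro ⟨hf, ht⟩
        rcases fin3cases x with rfl | rfl | rfl
        · rw [show (stC2 1).next 0 = 2 from rfl, t02 r] at ht; simp at ht
        · exact hf1 hf
        · exact hf2 hf
    · rw [filter_eq_of _ _ {0} ?_]
      · simpa [stC2, sC3b] using best_singleton r 2 0
      · intro x
        rcases fin3cases x with rfl | rfl | rfl
        · exact iff_of_true ⟨hf0, by rw [show (stC2 1).next 0 = 2 from rfl]; exact t02 r⟩
            (by decide)
        · exact iff_of_false (fun h => hf1 h.1) (by decide)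
        · exact iff_of_false (fun h => hf2 h.1) (by decide)

end Trace2
section Runs

lemma notFinished_of (r : Fin 3 → Fin 6) (s : DAState (Fin 3) (Fin 3)) (a : Fin 3) (b : Fin 3)
    (hfree : IsFree s a) (ht : target (mkPref menP1 r) a (s.next a) = some b) :
    ¬ Finished (mkPref menP1 r) s := by
  intro h
  rw [h a hfree] at ht
  exact nomatch ht

lemma finished_of (r : Fin 3 → Fin 6) (s : DAState (Fin 3) (Fin 3))
    (h : ∀ a : Fin 3, ¬ IsFree s a) : Finished (mkPref menP1 r) s :=
  fun a ha => absurd ha (h a)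

lemma fuel_eq : Fintype.card (Fin 3) * (Fintype.card (Fin 3) + 1) + 1 = 10 + 1 + 1 + 1 := by
  simp

lemma daFinal_A (r : Fin 3 → Fin 6) (h0 : r 0 = 0 ∨ r 0 = 1) :
    daFinal (mkPref menP1 r) = sA2 := by
  have h1 : daStep (mkPref menP1 r) daInit = st1 0 :=
    step1 r 0 (by rcases h0 with h | h <;> rw [h] <;> decide)
  have nf0 : ¬ Finished (mkPref menP1 r) daInit :=
    notFinished_of r _ 0 0 (fun b => by simp [daInit]) (t00 r)
  have nf1 : ¬ Finished (mkPref menP1 r) (st1 0) :=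
    notFinished_of r _ 1 1 (by rw [isFree_iff]; decide) (t11 r)
  have hfin : Finished (mkPref menP1 r) sA2 := by
    apply finished_of
    intro a
    rcases fin3cases a with rfl | rfl | rfl <;> rw [isFree_iff] <;> decide
  rw [daFinal, fuel_eq, daRun_step _ _ _ nf0, h1, daRun_step _ _ _ nf1, stepA2 r,
    daRun_finished _ _ _ hfin]

lemma daFinal_B (r : Fin 3 → Fin 6) (h0 : r 0 = 2 ∨ r 0 = 3) :
    daFinal (mkPref menP1 r) = sB2 := by
  have h1 : daStep (mkPref menP1 r) daInit = st1 1 :=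
    step1 r 1 (by rcases h0 with h | h <;> rw [h] <;> decide)
  have nf0 : ¬ Finished (mkPref menP1 r) daInit :=
    notFinished_of r _ 0 0 (fun b => by simp [daInit]) (t00 r)
  have nf1 : ¬ Finished (mkPref menP1 r) (st1 1) :=
    notFinished_of r _ 0 1 (by rw [isFree_iff]; decide) (t01 r)
  have hfin : Finished (mkPref menP1 r) sB2 := by
    apply finished_of
    intro a
    rcases fin3cases a with rfl | rfl | rfl <;> rw [isFree_iff] <;> decide
  rw [daFinal, fuel_eq, daRun_step _ _ _ nf0, h1, daRun_step _ _ _ nf1, stepB2 r,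
    daRun_finished _ _ _ hfin]

lemma daFinal_C (r : Fin 3 → Fin 6) (h0 : r 0 = 4 ∨ r 0 = 5) :
    daFinal (mkPref menP1 r) = sC3a ∨ daFinal (mkPref menP1 r) = sC3b := by
  have h1 : daStep (mkPref menP1 r) daInit = st1 2 :=
    step1 r 2 (by rcases h0 with h | h <;> rw [h] <;> decide)
  have nf0 : ¬ Finished (mkPref menP1 r) daInit :=
    notFinished_of r _ 0 0 (fun b => by simp [daInit]) (t00 r)
  have nf1 : ¬ Finished (mkPref menP1 r) (st1 2) :=
    notFinished_of r _ 0 1 (by rw [isFree_iff]; decide) (t01 r)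
  rcases le_or_gt (lab (r 1) (some 0)) (lab (r 1) (some 1)) with hc | hc
  · left
    have h2 : daStep (mkPref menP1 r) (st1 2) = stC2 0 := by
      apply stepC2 r 0 (Or.inl rfl)
      rintro x (rfl | rfl)
      · exact le_rfl
      · exact hc
    have nf2 : ¬ Finished (mkPref menP1 r) (stC2 0) :=
      notFinished_of r _ 1 2 (by rw [isFree_iff]; decide) (t12 r)
    have hfin : Finished (mkPref menP1 r) sC3a := by
      apply finished_of
      intro a
      rcases fin3cases a with rfl | rfl | rfl <;> rw [isFree_iff] <;> decide
    rw [daFinal, fuel_eq, daRun_step _ _ _ nf0, h1, daRun_step _ _ _ nf1, h2,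
      daRun_step _ _ _ nf2, stepC3a r, daRun_finished _ _ _ hfin]
  · right
    have h2 : daStep (mkPref menP1 r) (st1 2) = stC2 1 := by
      apply stepC2 r 1 (Or.inr rfl)
      rintro x (rfl | rfl)
      · exact hc.le
      · exact le_rfl
    have nf2 : ¬ Finished (mkPref menP1 r) (stC2 1) :=
      notFinished_of r _ 0 2 (by rw [isFree_iff]; decide) (t02 r)
    have hfin : Finished (mkPref menP1 r) sC3b := by
      apply finished_of
      intro a
      rcases fin3cases a with rfl | rfl | rfl <;> rw [isFree_iff] <;> decide
    rw [daFinal, fuel_eq, daRun_step _ _ _ nf0, h1, daRun_step _ _ _ nf1, h2,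
      daRun_step _ _ _ nf2, stepC3b r, daRun_finished _ _ _ hfin]

/-- Woman `w1`'s DA partner as a function of her own report. -/
lemma daNu_zero (r : Fin 3 → Fin 6) :
    daNu (mkPref menP1 r) 0 = some (![0, 0, 1, 1, 2, 2] (r 0)) := by
  have h6 : r 0 = 0 ∨ r 0 = 1 ∨ r 0 = 2 ∨ r 0 = 3 ∨ r 0 = 4 ∨ r 0 = 5 := by omega
  rcases h6 with h | h | h | h | h | h
  · rw [daNu, daFinal_A r (Or.inl h), h]; rfl
  · rw [daNu, daFinal_A r (Or.inr h), h]; rfl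
  · rw [daNu, daFinal_B r (Or.inl h), h]; rfl
  · rw [daNu, daFinal_B r (Or.inr h), h]; rfl
  · rcases daFinal_C r (Or.inl h) with hf | hf <;> rw [daNu, hf, h] <;> rfl
  · rcases daFinal_C r (Or.inr h) with hf | hf <;> rw [daNu, hf, h] <;> rfl

/-- Woman `w1`'s payoff depends only on her own report. -/
lemma piP1_zero (r : Fin 3 → Fin 6) :
    piP1 0 r = ![25, 25, 5, 5, 1, 1] (r 0) := by
  rw [piP1, daNu_zero r]
  have h6 : r 0 = 0 ∨ r 0 = 1 ∨ r 0 = 2 ∨ r 0 = 3 ∨ r 0 = 4 ∨ r 0 = 5 := by omega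
  rcases h6 with h | h | h | h | h | h
  · rw [h, show (![(0 : Fin 3), 0, 1, 1, 2, 2]) 0 = 0 from rfl,
      show (![(25 : ℝ), 25, 5, 5, 1, 1]) 0 = 25 from rfl]
    simp [womenP1, lab, pl, uconv]
  · rw [h, show (![(0 : Fin 3), 0, 1, 1, 2, 2]) 1 = 0 from rfl,
      show (![(25 : ℝ), 25, 5, 5, 1, 1]) 1 = 25 from rfl]
    simp [womenP1, lab, pl, uconv]
  · rw [h, show (![(0 : Fin 3), 0, 1, 1, 2, 2]) 2 = 1 from rfl,
      show (![(25 : ℝ), 25, 5, 5, 1, 1]) 2 = 5 from rfl]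
    simp [womenP1, lab, pl, uconv]
  · rw [h, show (![(0 : Fin 3), 0, 1, 1, 2, 2]) 3 = 1 from rfl,
      show (![(25 : ℝ), 25, 5, 5, 1, 1]) 3 = 5 from rfl]
    simp [womenP1, lab, pl, uconv]
  · rw [h, show (![(0 : Fin 3), 0, 1, 1, 2, 2]) 4 = 2 from rfl,
      show (![(25 : ℝ), 25, 5, 5, 1, 1]) 4 = 1 from rfl]
    simp [womenP1, lab, pl, uconv]
  · rw [h, show (![(0 : Fin 3), 0, 1, 1, 2, 2]) 5 = 2 from rfl,
      show (![(25 : ℝ), 25, 5, 5, 1, 1]) 5 = 1 from rfl]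
    simp [womenP1, lab, pl, uconv]

end Runs
section Mixed

lemma sum_weights {x : ∀ _ : Fin 3, Fin 6 → ℝ} (hx : IsMixed x) :
    ∑ s : Fin 3 → Fin 6, ∏ j, x j (s j) = 1 := by
  rw [← Fintype.prod_sum x]
  exact Finset.prod_eq_one (fun i _ => (hx i).2)

lemma expPay_const (π : ∀ _ : Fin 3, (Fin 3 → Fin 6) → ℝ) (i : Fin 3)
    (x : ∀ _ : Fin 3, Fin 6 → ℝ) (hx : IsMixed x) (c : ℝ)
    (hc : ∀ s : Fin 3 → Fin 6, (∏ j, x j (s j)) ≠ 0 → π i s = c) :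
    expPay π i x = c := by
  rw [expPay]
  have he : ∀ s : Fin 3 → Fin 6, (∏ j, x j (s j)) * π i s = (∏ j, x j (s j)) * c := by
    intro s
    by_cases h : (∏ j, x j (s j)) = 0
    · rw [h, zero_mul, zero_mul]
    · rw [hc s h]
  rw [Finset.sum_congr rfl (fun s _ => he s), ← Finset.sum_mul, sum_weights hx, one_mul]

lemma isMixed_update (x : ∀ _ : Fin 3, Fin 6 → ℝ) (hx : IsMixed x) (i : Fin 3) (h : Fin 6) :
    IsMixed (Function.update x i (delta h)) := by
  intro j
  by_cases hj : j = i
  · subst hj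
    rw [Function.update_self]
    constructor
    · intro t
      by_cases ht : t = h
      · have h1 : delta (I := Fin 3) (S := fun _ => Fin 6) (i := j) h t = 1 := if_pos ht
        exact le_of_le_of_eq zero_le_one h1.symm
      · have h1 : delta (I := Fin 3) (S := fun _ => Fin 6) (i := j) h t = 0 := if_neg ht
        exact le_of_eq h1.symm
    · have hsum : ∑ t : Fin 6, delta (I := Fin 3) (S := fun _ => Fin 6) (i := j) h t = delta (I := Fin 3) (S := fun _ => Fin 6) (i := j) h h :=
        Finset.sum_eq_single h (fun t _ ht => if_neg ht)
          (fun ht => absurd (Finset.mem_univ h) ht)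
      exact hsum.trans (if_pos rfl)
  · rw [Function.update_of_ne hj]
    exact hx j

end Mixed
/-- In the problem `P1` under the man-proposing DA with
truthful men and utility `u_conv = (25,5,1)`, the set
`H = {W1,W2} × {W1,…,W6} × {W1,…,W6}` of women's report profiles is a partial
preimage of `μ^M_1` that is closed under weakly better replies; hence `μ^M_1`
is asymptotically stable. -/
theorem P1_H_cuwbr_asymp_stable :
    (∀ r : Fin 3 → Fin 6, (∀ i, r i ∈ H19 i) →
      daMu (mkPref menP1 r) = muM1.mu ∧ daNu (mkPref menP1 r) = muM1.nu) ∧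
    CUWBR piP1 H19 ∧
    AsympStable piP1 muM1 := by
  have part1 : ∀ r : Fin 3 → Fin 6, (∀ i, r i ∈ H19 i) →
      daMu (mkPref menP1 r) = muM1.mu ∧ daNu (mkPref menP1 r) = muM1.nu := by
    intro r hr
    have h0 : r 0 = 0 ∨ r 0 = 1 := by simpa [H19] using hr 0
    have hfin := daFinal_A r h0
    constructor
    · funext a
      have key : ∀ a0 : Fin 3, daMu (mkPref menP1 r) a0 = some a0 := by
        intro a0
        apply daMu_eq
        intro c
        rw [hfin]
        rcases fin3cases a0 with rfl | rfl | rfl <;>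
          rcases fin3cases c with rfl | rfl | rfl <;> simp [sA2]
      rcases fin3cases a with rfl | rfl | rfl <;> rw [key] <;> rfl
    · funext b
      rw [daNu, hfin]
      rcases fin3cases b with rfl | rfl | rfl <;> rfl
  have hpay : ∀ (h : Fin 6) (x : ∀ _ : Fin 3, Fin 6 → ℝ), IsMixed x →
      expPay piP1 0 (Function.update x 0 (delta h)) = ![25, 25, 5, 5, 1, 1] h := by
    intro h x hx
    apply expPay_const _ _ _ (isMixed_update x hx 0 h)
    intro s hs
    have hne : Function.update x 0 (delta h) 0 (s 0) ≠ 0 := by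
      intro hz
      exact hs (Finset.prod_eq_zero (Finset.mem_univ 0) hz)
    rw [Function.update_self] at hne
    have h0 : s 0 = h := by
      by_contra hq
      exact hne (by simp [delta, hq])
    rw [piP1_zero, h0]
  have part2 : CUWBR piP1 H19 := by
    rintro i h ⟨x, hx, hsupp, hle⟩
    rcases fin3cases i with rfl | rfl | rfl
    · by_contra hmem
      have hh : h = 2 ∨ h = 3 ∨ h = 4 ∨ h = 5 := by
        have hno : ¬ (h = 0 ∨ h = 1) := by simpa [H19] using hmem
        have : ∀ h : Fin 6, ¬ (h = 0 ∨ h = 1) → h = 2 ∨ h = 3 ∨ h = 4 ∨ h = 5 := by decide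
        exact this h hno
      have h25 : expPay piP1 0 x = 25 := by
        apply expPay_const _ _ _ hx
        intro s hs
        have hne : x 0 (s 0) ≠ 0 := fun hz => hs (Finset.prod_eq_zero (Finset.mem_univ 0) hz)
        have hs0 : s 0 = 0 ∨ s 0 = 1 := by simpa [H19] using hsupp 0 (s 0) hne
        rw [piP1_zero]
        rcases hs0 with h' | h' <;> rw [h'] <;> rfl
      have hdev : expPay piP1 0 (Function.update x 0 (delta h)) = ![25, 25, 5, 5, 1, 1] h :=
        hpay h x hx
      have h2 : (25 : ℝ) ≤ ![25, 25, 5, 5, 1, 1] h := h25.symm.trans_le (hle.trans_eq hdev)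
      rcases hh with rfl | rfl | rfl | rfl
      · rw [show (![(25 : ℝ), 25, 5, 5, 1, 1]) 2 = 5 from rfl] at h2; norm_num at h2
      · rw [show (![(25 : ℝ), 25, 5, 5, 1, 1]) 3 = 5 from rfl] at h2; norm_num at h2
      · rw [show (![(25 : ℝ), 25, 5, 5, 1, 1]) 4 = 1 from rfl] at h2; norm_num at h2
      · rw [show (![(25 : ℝ), 25, 5, 5, 1, 1]) 5 = 1 from rfl] at h2; norm_num at h2
    · simp [H19]
    · simp [H19]
  refine ⟨part1, part2, H19, ⟨fun _ => 0, ?_⟩, part1, part2⟩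
  intro i
  rcases fin3cases i with rfl | rfl | rfl <;> simp [H19]
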